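/- Let 0 < α < 1 and define ω_k = 2^α((2k+1)^{−α} − (2k−1)^{−α}) for integers k ≥ 1. Then for every k ≥ 1, ω_k < ω_{k+1} < 0, and there is a constant C > 0 such that for every k ≥ 1, |ω_k + α/k^{1+α}| ≤ C / k^{2+α}. -/
import Mathlib


/-- Interior weights `ω_k` of the midpoint-based approximation. -/
noncomputable def wk (α : ℝ) (k : ℕ) : ℝ :=
  (2:ℝ) ^ α * ((2 * (k:ℝ) + 1) ^ (-α) - (2 * (k:ℝ) - 1) ^ (-α))

/-- Mean value theorem for `x ↦ x^(-α)` : the slope is `-α c^(-α-1)` for some interior `c`. -/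
lemma slope_rpow (α a b : ℝ) (ha : 0 < a) (hab : a < b) :
    ∃ c ∈ Set.Ioo a b, (b ^ (-α) - a ^ (-α)) / (b - a) = -α * c ^ (-α - 1) := by
  have hcont : ContinuousOn (fun x : ℝ => x ^ (-α)) (Set.Icc a b) := fun x hx =>
    (Real.continuousAt_rpow_const x (-α)
      (Or.inl (ne_of_gt (lt_of_lt_of_le ha hx.1)))).continuousWithinAt
  have hderiv : ∀ x ∈ Set.Ioo a b,
      HasDerivAt (fun x : ℝ => x ^ (-α)) (-α * x ^ (-α - 1)) x := fun x hx =>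
    Real.hasDerivAt_rpow_const (Or.inl (ne_of_gt (lt_trans ha hx.1)))
  obtain ⟨c, hc, heq⟩ := exists_hasDerivAt_eq_slope (fun x : ℝ => x ^ (-α))
    (fun x => -α * x ^ (-α - 1)) hab hcont hderiv
  exact ⟨c, hc, heq.symm⟩

/-- MVT bound: `|b^(-p) - a^(-p)| ≤ p * a^(-p-1) * (b-a)` for `0 < p`, `0 < a ≤ b`. -/
lemma mvt_rpow_bound (p a b : ℝ) (hp : 0 < p) (ha : 0 < a) (hab : a ≤ b) :
    |b ^ (-p) - a ^ (-p)| ≤ p * a ^ (-p - 1) * (b - a) := by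
  rcases eq_or_lt_of_le hab with rfl | hab
  · simp
  obtain ⟨c, hc, heq⟩ := slope_rpow p a b ha hab
  have hba : (0:ℝ) < b - a := by linarith
  have hc0 : 0 < c := lt_trans ha hc.1
  have hcle : c ^ (-p - 1) ≤ a ^ (-p - 1) :=
    Real.rpow_le_rpow_of_nonpos ha hc.1.le (by linarith)
  have hcpos : 0 ≤ c ^ (-p - 1) := (Real.rpow_pos_of_pos hc0 _).le
  have h1 : b ^ (-p) - a ^ (-p) = -p * c ^ (-p - 1) * (b - a) := by
    field_simp at heq
    linarith [heq]
  rw [h1, abs_mul, abs_of_pos hba, abs_mul, abs_neg, abs_of_pos hp,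
    abs_of_nonneg hcpos]
  have := mul_le_mul_of_nonneg_left hcle hp.le
  nlinarith

/-- Midpoint-type estimate. -/
lemma main_est (p m : ℝ) (hp : 0 < p) (hm : 2 ≤ m) :
    |(m + 1) ^ (-p) - (m - 1) ^ (-p) + 2 * p * m ^ (-p - 1)| ≤
      4 * p * (p + 1) * (m - 1) ^ (-p - 2) := by
  have hm1 : (0:ℝ) < m - 1 := by linarith
  have hm0 : (0:ℝ) < m := by linarith
  set G : ℝ → ℝ := fun x => x ^ (-p) + p * m ^ (-p - 1) * x with hG
  set D : ℝ := p * ((m - 1) ^ (-p - 1) - (m + 1) ^ (-p - 1)) with hD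
  have key : ∀ x ∈ Set.Icc (m - 1) (m + 1), ‖G x - G (m - 1)‖ ≤ D * (x - (m - 1)) := by
    apply norm_image_sub_le_of_norm_deriv_le_segment'
      (f' := fun x => -p * x ^ (-p - 1) + p * m ^ (-p - 1))
    · intro x hx
      have hx0 : (0:ℝ) < x := lt_of_lt_of_le hm1 hx.1
      exact (((Real.hasDerivAt_rpow_const (p := -p) (Or.inl hx0.ne')).add
        ((hasDerivAt_id x).const_mul (p * m ^ (-p - 1)))).congr_deriv
        (by ring)).hasDerivWithinAt
    · intro x hx
      have hx0 : (0:ℝ) < x := lt_of_lt_of_le hm1 hx.1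
      have h1 : (m + 1) ^ (-p - 1) ≤ x ^ (-p - 1) :=
        Real.rpow_le_rpow_of_nonpos hx0 hx.2.le (by linarith)
      have h2 : x ^ (-p - 1) ≤ (m - 1) ^ (-p - 1) :=
        Real.rpow_le_rpow_of_nonpos hm1 hx.1 (by linarith)
      have h3 : (m + 1) ^ (-p - 1) ≤ m ^ (-p - 1) :=
        Real.rpow_le_rpow_of_nonpos hm0 (by linarith) (by linarith)
      have h4 : m ^ (-p - 1) ≤ (m - 1) ^ (-p - 1) :=
        Real.rpow_le_rpow_of_nonpos hm1 (by linarith) (by linarith)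
      rw [Real.norm_eq_abs, abs_le]
      constructor <;> [nlinarith; nlinarith]
  have hend := key (m + 1) ⟨by linarith, le_refl _⟩
  have hGdiff : G (m + 1) - G (m - 1) =
      (m + 1) ^ (-p) - (m - 1) ^ (-p) + 2 * p * m ^ (-p - 1) := by
    simp only [hG]; ring
  have hDle : D ≤ 2 * p * (p + 1) * (m - 1) ^ (-p - 2) := by
    have := mvt_rpow_bound (p + 1) (m - 1) (m + 1) (by linarith) hm1 (by linarith)
    have heq1 : (-(p + 1) : ℝ) = -p - 1 := by ring
    have heq2 : (-p - 1 - 1 : ℝ) = -p - 2 := by ring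
    rw [heq1, heq2] at this
    have habs : (m - 1) ^ (-p - 1) - (m + 1) ^ (-p - 1) ≤
        |(m + 1) ^ (-p - 1) - (m - 1) ^ (-p - 1)| := by
      rw [abs_sub_comm]; exact le_abs_self _
    rw [hD]
    nlinarith
  have hnn : (0:ℝ) ≤ (m - 1) ^ (-p - 2) := (Real.rpow_pos_of_pos hm1 _).le
  calc |(m + 1) ^ (-p) - (m - 1) ^ (-p) + 2 * p * m ^ (-p - 1)|
      = ‖G (m + 1) - G (m - 1)‖ := by rw [hGdiff.symm, Real.norm_eq_abs]
    _ ≤ D * ((m + 1) - (m - 1)) := hend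
    _ = 2 * D := by ring
    _ ≤ 4 * p * (p + 1) * (m - 1) ^ (-p - 2) := by nlinarith

theorem stmt17 (α : ℝ) (hα0 : 0 < α) (hα1 : α < 1) :
    (∀ k : ℕ, 1 ≤ k → wk α k < wk α (k + 1) ∧ wk α (k + 1) < 0) ∧
    ∃ C > 0, ∀ k : ℕ, 1 ≤ k →
      |wk α k + α / (k:ℝ) ^ (1 + α)| ≤ C / (k:ℝ) ^ (2 + α) := by
  have h2pos : (0:ℝ) < (2:ℝ) ^ α := Real.rpow_pos_of_pos two_pos _
  constructor
  · intro k hk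
    have hk1 : (1:ℝ) ≤ (k:ℝ) := by exact_mod_cast hk
    have hcast : (↑(k + 1) : ℝ) = (k:ℝ) + 1 := by push_cast; ring
    have hA : (0:ℝ) < 2 * (k:ℝ) - 1 := by linarith
    constructor
    · -- monotonicity via MVT on two adjacent intervals
      obtain ⟨c₁, hc₁, h₁⟩ := slope_rpow α (2 * (k:ℝ) - 1) (2 * (k:ℝ) + 1) hA (by linarith)
      obtain ⟨c₂, hc₂, h₂⟩ := slope_rpow α (2 * (k:ℝ) + 1) (2 * (k:ℝ) + 3)
        (by linarith) (by linarith)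
      have e₁ : (2 * (k:ℝ) + 1) - (2 * (k:ℝ) - 1) = 2 := by ring
      have e₂ : (2 * (k:ℝ) + 3) - (2 * (k:ℝ) + 1) = 2 := by ring
      rw [e₁] at h₁; rw [e₂] at h₂
      have hc₁0 : (0:ℝ) < c₁ := lt_trans hA hc₁.1
      have hlt : c₂ ^ (-α - 1) < c₁ ^ (-α - 1) :=
        Real.rpow_lt_rpow_of_neg hc₁0 (lt_trans hc₁.2 hc₂.1) (by linarith)
      have hslope : ((2 * (k:ℝ) + 1) ^ (-α) - (2 * (k:ℝ) - 1) ^ (-α)) / 2 <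
          ((2 * (k:ℝ) + 3) ^ (-α) - (2 * (k:ℝ) + 1) ^ (-α)) / 2 := by
        rw [h₁, h₂]
        nlinarith [mul_pos hα0 (sub_pos.2 hlt)]
      have hdiff : (2 * (k:ℝ) + 1) ^ (-α) - (2 * (k:ℝ) - 1) ^ (-α) <
          (2 * (k:ℝ) + 3) ^ (-α) - (2 * (k:ℝ) + 1) ^ (-α) := by linarith
      unfold wk
      rw [hcast]
      have h23 : 2 * ((k:ℝ) + 1) + 1 = 2 * (k:ℝ) + 3 := by ring
      have h21 : 2 * ((k:ℝ) + 1) - 1 = 2 * (k:ℝ) + 1 := by ring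
      rw [h23, h21]
      exact mul_lt_mul_of_pos_left hdiff h2pos
    · unfold wk
      rw [hcast]
      have h23 : 2 * ((k:ℝ) + 1) + 1 = 2 * (k:ℝ) + 3 := by ring
      have h21 : 2 * ((k:ℝ) + 1) - 1 = 2 * (k:ℝ) + 1 := by ring
      rw [h23, h21]
      have : (2 * (k:ℝ) + 3) ^ (-α) < (2 * (k:ℝ) + 1) ^ (-α) :=
        Real.rpow_lt_rpow_of_neg (by linarith) (by linarith) (by linarith)
      nlinarith
  · refine ⟨(2:ℝ) ^ α * (4 * α * (α + 1)), by positivity, ?_⟩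
    intro k hk
    have hk1 : (1:ℝ) ≤ (k:ℝ) := by exact_mod_cast hk
    have hk0 : (0:ℝ) < (k:ℝ) := by linarith
    set m : ℝ := 2 * (k:ℝ) with hm
    have hm2 : (2:ℝ) ≤ m := by rw [hm]; linarith
    -- rewrite α / k^(1+α) = 2^α * (2α) * m^(-α-1)
    have hid : α / (k:ℝ) ^ (1 + α) = (2:ℝ) ^ α * (2 * α * m ^ (-α - 1)) := by
      rw [hm]
      have : (2 * (k:ℝ)) ^ (-α - 1) = (2:ℝ) ^ (-α - 1) * (k:ℝ) ^ (-α - 1) :=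
        Real.mul_rpow (by norm_num) hk0.le
      rw [this]
      rw [div_eq_iff (ne_of_gt (Real.rpow_pos_of_pos hk0 (1 + α)))]
      have h2 : (2:ℝ) ^ α * (2:ℝ) ^ (-α - 1) = 2⁻¹ := by
        rw [← Real.rpow_add two_pos, show α + (-α - 1) = (-1:ℝ) by ring,
          Real.rpow_neg_one]
      have h3 : (k:ℝ) ^ (-α - 1) * (k:ℝ) ^ (1 + α) = 1 := by
        rw [← Real.rpow_add hk0, show -α - 1 + (1 + α) = (0:ℝ) by ring, Real.rpow_zero]
      symm
      calc (2:ℝ) ^ α * (2 * α * ((2:ℝ) ^ (-α - 1) * (k:ℝ) ^ (-α - 1))) * (k:ℝ) ^ (1 + α)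
          = ((2:ℝ) ^ α * (2:ℝ) ^ (-α - 1)) * (2 * α) *
            ((k:ℝ) ^ (-α - 1) * (k:ℝ) ^ (1 + α)) := by ring
        _ = α := by rw [h2, h3]; ring
    have hwk : wk α k = (2:ℝ) ^ α * ((m + 1) ^ (-α) - (m - 1) ^ (-α)) := by
      unfold wk; rw [hm]
    have hest := main_est α m hα0 hm2
    have habs : |wk α k + α / (k:ℝ) ^ (1 + α)| =
        (2:ℝ) ^ α * |(m + 1) ^ (-α) - (m - 1) ^ (-α) + 2 * α * m ^ (-α - 1)| := by
      rw [hwk, hid, ← mul_add, abs_mul, abs_of_pos h2pos]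
    rw [habs]
    have hm1k : (k:ℝ) ≤ m - 1 := by rw [hm]; linarith
    have hmono : (m - 1) ^ (-α - 2) ≤ (k:ℝ) ^ (-α - 2) :=
      Real.rpow_le_rpow_of_nonpos hk0 hm1k (by linarith)
    have hfinal : (2:ℝ) ^ α * |(m + 1) ^ (-α) - (m - 1) ^ (-α) + 2 * α * m ^ (-α - 1)| ≤
        (2:ℝ) ^ α * (4 * α * (α + 1)) * (k:ℝ) ^ (-α - 2) := by
      calc (2:ℝ) ^ α * |(m + 1) ^ (-α) - (m - 1) ^ (-α) + 2 * α * m ^ (-α - 1)|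
          ≤ (2:ℝ) ^ α * (4 * α * (α + 1) * (m - 1) ^ (-α - 2)) :=
            mul_le_mul_of_nonneg_left hest h2pos.le
        _ ≤ (2:ℝ) ^ α * (4 * α * (α + 1)) * (k:ℝ) ^ (-α - 2) := by
            have h5 := mul_le_mul_of_nonneg_left hmono
              (show (0:ℝ) ≤ (2:ℝ) ^ α * (4 * α * (α + 1)) by positivity)
            nlinarith [h5]
    have hrw : (2:ℝ) ^ α * (4 * α * (α + 1)) / (k:ℝ) ^ (2 + α) =
        (2:ℝ) ^ α * (4 * α * (α + 1)) * (k:ℝ) ^ (-α - 2) := by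
      rw [div_eq_mul_inv, ← Real.rpow_neg hk0.le]
      congr 1
      ring_nf
    rw [hrw]
    exact hfinal
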